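/- arXiv:1201.4116 — 2 statements merged into one kernel-verified Lean document; each statement's English description precedes it below -/
import Mathlib

section
/- (Necessary condition and lower bound) If the load-coupling system has a nonnegative solution ρ* (i.e. ρ* ≥ 0 and f_i(ρ*) = ρ*_i for all i), then the linear system ρ = h⁰(ρ) has a nonnegative solution; moreover, there exists a nonnegative solution ρ⁰ of ρ = h⁰(ρ) with ρ⁰_i ≤ ρ*_i for every cell i. -/
lemma aux_two_log (v : ℝ) (hv : 1 ≤ v) : 2 * Real.log v ≤ v - 1/v := by
  have hmono : MonotoneOn (fun v : ℝ => v - 1/v - 2 * Real.log v) (Set.Ici 1) := by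
    apply monotoneOn_of_deriv_nonneg (convex_Ici 1)
    · apply ContinuousOn.sub
      · apply ContinuousOn.sub continuousOn_id
        exact continuousOn_const.div continuousOn_id (fun x hx => by
          have : (1:ℝ) ≤ x := hx; positivity)
      · exact continuousOn_const.mul (Real.continuousOn_log.mono (fun x hx => by
          simp only [Set.mem_compl_iff, Set.mem_singleton_iff]
          have : (1:ℝ) ≤ x := hx; intro h; simp [h] at this; linarith))
    · intro x hx
      rw [interior_Ici] at hx
      have hx1 : (1:ℝ) < x := hx
      have hx0 : (0:ℝ) < x := by linarith
      have hd : HasDerivAt (fun v : ℝ => v - 1/v - 2 * Real.log v)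
          (1 - (-1/x^2) - 2 * (1/x)) x := by
        have h1 : HasDerivAt (fun v : ℝ => 1/v) (-1/x^2) x := by
          simpa [neg_div] using hasDerivAt_inv hx0.ne'
        have h2 : HasDerivAt Real.log (1/x) x := by
          simpa using Real.hasDerivAt_log hx0.ne'
        exact ((hasDerivAt_id x).sub h1).sub ((h2.const_mul 2))
      exact hd.differentiableAt.differentiableWithinAt
    · intro x hx
      rw [interior_Ici] at hx
      have hx1 : (1:ℝ) < x := hx
      have hx0 : (0:ℝ) < x := by linarith
      have hd : HasDerivAt (fun v : ℝ => v - 1/v - 2 * Real.log v)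
          (1 - (-1/x^2) - 2 * (1/x)) x := by
        have h1 : HasDerivAt (fun v : ℝ => 1/v) (-1/x^2) x := by
          simpa [neg_div] using hasDerivAt_inv hx0.ne'
        have h2 : HasDerivAt Real.log (1/x) x := by
          simpa using Real.hasDerivAt_log hx0.ne'
        exact ((hasDerivAt_id x).sub h1).sub ((h2.const_mul 2))
      rw [hd.deriv]
      have : 0 ≤ (x - 1)^2 / x^2 := by positivity
      have hxx : (x-1)^2/x^2 = 1 - (-1/x^2) - 2 * (1/x) := by
        field_simp; ring
      linarith [hxx ▸ this]
  have := hmono (Set.self_mem_Ici) (show v ∈ Set.Ici 1 from hv) hv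
  simp only [Real.log_one] at this
  rw [one_div]
  norm_num at this
  linarith

lemma aux_log_sq (y : ℝ) (hy : 0 < y) :
    Real.log (1 + 1/y) ^ 2 ≤ 1 / (y * (y + 1)) := by
  set v := Real.sqrt ((y+1)/y) with hv
  have hq : (1:ℝ) ≤ (y+1)/y := by rw [le_div_iff₀ hy]; linarith
  have hv1 : 1 ≤ v := by
    have := Real.sqrt_le_sqrt hq
    rwa [Real.sqrt_one] at this
  have hv0 : 0 < v := by linarith
  have hvsq : v^2 = (y+1)/y := Real.sq_sqrt (by linarith)
  have hlog : Real.log (1 + 1/y) = 2 * Real.log v := by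
    rw [show (1:ℝ) + 1/y = (y+1)/y by field_simp, ← hvsq, Real.log_pow]
    push_cast; ring
  have hle := aux_two_log v hv1
  have hlogpos : 0 ≤ Real.log (1 + 1/y) := by
    apply Real.log_nonneg; rw [le_add_iff_nonneg_right]; positivity
  have h2 : Real.log (1 + 1/y) ≤ v - 1/v := by rw [hlog]; exact hle
  have h3 : Real.log (1 + 1/y) ^ 2 ≤ (v - 1/v)^2 := by
    apply pow_le_pow_left₀ hlogpos h2
  refine h3.trans (le_of_eq ?_)
  have : (v - 1/v)^2 = (v^2 - 1)^2 / v^2 := by field_simp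
  rw [this, hvsq]
  field_simp
  ring

lemma aux_hasDeriv (y : ℝ) (hy : 0 < y) :
    HasDerivAt (fun y : ℝ => (Real.log (1 + 1/y))⁻¹ - y)
      (1 / (y*(y+1)) / (Real.log (1 + 1/y))^2 - 1) y := by
  have harg : 0 < 1 + 1/y := by positivity
  have hgt : (1:ℝ) < 1 + 1/y := by rw [lt_add_iff_pos_right]; positivity
  have hL : 0 < Real.log (1 + 1/y) := Real.log_pos hgt
  have h1 : HasDerivAt (fun y : ℝ => 1 + 1/y) (-1/y^2) y := by
    simpa [neg_div] using (hasDerivAt_inv hy.ne').const_add (1:ℝ)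
  have h2 : HasDerivAt (fun y : ℝ => Real.log (1 + 1/y))
      ((1 + 1/y)⁻¹ * (-1/y^2)) y := by
    simpa [mul_comm, Function.comp_def] using (Real.hasDerivAt_log harg.ne').comp y h1
  have h3 : HasDerivAt (fun y : ℝ => (Real.log (1 + 1/y))⁻¹)
      (-((1 + 1/y)⁻¹ * (-1/y^2)) / (Real.log (1 + 1/y))^2) y := h2.inv hL.ne'
  have h4 : HasDerivAt (fun y : ℝ => (Real.log (1 + 1/y))⁻¹ - y) _ y := h3.sub (hasDerivAt_id' y)
  convert h4 using 1
  have h5 : -((1 + 1/y)⁻¹ * (-1/y^2)) = 1/(y*(y+1)) := by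
    rw [show (1:ℝ) + 1/y = (y+1)/y by field_simp]
    rw [inv_div]
    field_simp
  rw [h5]

lemma aux_mono : MonotoneOn (fun y : ℝ => (Real.log (1 + 1/y))⁻¹ - y) (Set.Ioi 0) := by
  apply monotoneOn_of_deriv_nonneg (convex_Ioi 0)
  · intro y hy
    exact (aux_hasDeriv y hy).continuousAt.continuousWithinAt
  · intro y hy
    rw [interior_Ioi] at hy
    exact (aux_hasDeriv y hy).differentiableAt.differentiableWithinAt
  · intro y hy
    rw [interior_Ioi] at hy
    have hy : (0:ℝ) < y := hy
    rw [(aux_hasDeriv y hy).deriv]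
    have hgt : (1:ℝ) < 1 + 1/y := by rw [lt_add_iff_pos_right]; positivity
    have hL : 0 < Real.log (1 + 1/y) := Real.log_pos hgt
    have hsq := aux_log_sq y hy
    have hpos : (0:ℝ) < y*(y+1) := by positivity
    have h1 : (1:ℝ) ≤ 1 / (y*(y+1)) / (Real.log (1 + 1/y))^2 := by
      rw [le_div_iff₀ (by positivity), one_mul]
      calc Real.log (1 + 1/y)^2 ≤ 1/(y*(y+1)) := hsq
        _ = 1/(y*(y+1)) := rfl
    linarith

lemma aux_key (x s : ℝ) (hx : 0 < x) (hs : 0 ≤ s) :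
    Real.log 2 * s ≤ (Real.logb 2 (1 + 1/(x+s)))⁻¹ - (Real.logb 2 (1+1/x))⁻¹ := by
  have hxs : 0 < x + s := by linarith
  have hmono := aux_mono (Set.mem_Ioi.2 hx) (Set.mem_Ioi.2 hxs) (by linarith : x ≤ x + s)
  simp only at hmono
  have e : ∀ z : ℝ, 0 < z → (Real.logb 2 (1 + 1/z))⁻¹ = Real.log 2 * (Real.log (1+1/z))⁻¹ := by
    intro z hz
    rw [Real.logb, inv_div, div_eq_mul_inv]
  rw [e x hx, e (x+s) hxs]
  have hlog2 : 0 < Real.log 2 := Real.log_pos (by norm_num)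
  have : (Real.log (1+1/x))⁻¹ + s ≤ (Real.log (1+1/(x+s)))⁻¹ := by linarith
  calc Real.log 2 * s = Real.log 2 * (((Real.log (1+1/x))⁻¹ + s) - (Real.log (1+1/x))⁻¹) := by ring
    _ ≤ Real.log 2 * ((Real.log (1+1/(x+s)))⁻¹ - (Real.log (1+1/x))⁻¹) := by
        apply mul_le_mul_of_nonneg_left _ hlog2.le
        linarith
    _ = Real.log 2 * (Real.log (1 + 1/(x+s)))⁻¹ - Real.log 2 * (Real.log (1+1/x))⁻¹ := by ring

/-- Necessary condition and lower bound: if the load-coupling system has a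
nonnegative solution `ρ*`, then the linear system `ρ = h⁰(ρ)` has a
nonnegative solution, which moreover bounds `ρ*` from below. -/
theorem stmt_11
    (n : ℕ) (hn : 2 ≤ n)
    (J : Fin n → Finset ℕ) (hJ : ∀ i, (J i).Nonempty)
    (a c : Fin n → ℕ → ℝ) (b : Fin n → Fin n → ℕ → ℝ)
    (ha : ∀ i, ∀ j ∈ J i, 0 < a i j)
    (hc : ∀ i, ∀ j ∈ J i, 0 < c i j)
    (hb : ∀ i k, k ≠ i → ∀ j ∈ J i, 0 < b i k j)
    (f : Fin n → (Fin n → ℝ) → ℝ)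
    (hf : ∀ i ρ, f i ρ =
      ∑ j ∈ J i, 1 / (a i j * Real.logb 2
        (1 + 1 / (∑ k ∈ Finset.univ.erase i, b i k j * ρ k + c i j))))
    (H : Fin n → Fin n → ℝ)
    (hH : ∀ i k, H i k = Real.log 2 * ∑ j ∈ J i, b i k j / a i j)
    (h0 : Fin n → (Fin n → ℝ) → ℝ)
    (hh0 : ∀ i ρ, h0 i ρ =
      f i 0 + ∑ k ∈ Finset.univ.erase i, H i k * ρ k)
    (ρstar : Fin n → ℝ) (hρstar : ∀ i, 0 ≤ ρstar i)
    (hfix : ∀ i, f i ρstar = ρstar i) :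
    ∃ ρ₀ : Fin n → ℝ, (∀ i, 0 ≤ ρ₀ i) ∧ (∀ i, h0 i ρ₀ = ρ₀ i) ∧
      ∀ i, ρ₀ i ≤ ρstar i := by
  -- nonnegativity of H off-diagonal
  have hHnn : ∀ i, ∀ k ∈ Finset.univ.erase i, 0 ≤ H i k := by
    intro i k hk
    have hki : k ≠ i := (Finset.mem_erase.1 hk).1
    rw [hH]
    apply mul_nonneg (Real.log_nonneg (by norm_num))
    apply Finset.sum_nonneg
    intro j hj
    exact le_of_lt (div_pos (hb i k hki j hj) (ha i j hj))
  -- monotonicity of h0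
  have hmono : ∀ ρ σ : Fin n → ℝ, (∀ k, ρ k ≤ σ k) → ∀ i, h0 i ρ ≤ h0 i σ := by
    intro ρ σ hle i
    rw [hh0, hh0]
    apply add_le_add le_rfl
    apply Finset.sum_le_sum
    intro k hk
    exact mul_le_mul_of_nonneg_left (hle k) (hHnn i k hk)
  -- f i 0 is nonneg
  have hf0nn : ∀ i, 0 ≤ f i 0 := by
    intro i
    rw [hf]
    apply Finset.sum_nonneg
    intro j hj
    have hcj := hc i j hj
    have : (∑ k ∈ Finset.univ.erase i, b i k j * (0 : Fin n → ℝ) k + c i j) = c i j := by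
      simp
    rw [this]
    have hlb : 0 < Real.logb 2 (1 + 1 / c i j) := by
      apply Real.logb_pos (by norm_num)
      rw [lt_add_iff_pos_right]; positivity
    exact le_of_lt (div_pos one_pos (mul_pos (ha i j hj) hlb))
  -- the key inequality: h0 i ρstar ≤ ρstar i
  have hkey : ∀ i, h0 i ρstar ≤ ρstar i := by
    intro i
    rw [hh0, ← hfix i, hf i ρstar]
    have hf0 : f i 0 = ∑ j ∈ J i, 1 / (a i j * Real.logb 2 (1 + 1 / c i j)) := by
      rw [hf i 0]
      apply Finset.sum_congr rfl
      intro j hj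
      congr 2
      simp
    rw [hf0]
    have hswap : ∑ k ∈ Finset.univ.erase i, H i k * ρstar k
        = ∑ j ∈ J i, ∑ k ∈ Finset.univ.erase i,
            Real.log 2 * (b i k j / a i j) * ρstar k := by
      rw [Finset.sum_comm]
      apply Finset.sum_congr rfl
      intro k hk
      rw [hH i k, Finset.mul_sum, Finset.sum_mul]
    rw [hswap, ← Finset.sum_add_distrib]
    apply Finset.sum_le_sum
    intro j hj
    set A := a i j with hA
    set C := c i j with hC
    set S := ∑ k ∈ Finset.univ.erase i, b i k j * ρstar k with hSdef
    have hApos := ha i j hj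
    have hCpos := hc i j hj
    have hSnn : 0 ≤ S := by
      apply Finset.sum_nonneg
      intro k hk
      exact mul_nonneg (le_of_lt (hb i k (Finset.mem_erase.1 hk).1 j hj)) (hρstar k)
    have hsum : ∑ k ∈ Finset.univ.erase i, Real.log 2 * (b i k j / A) * ρstar k
        = Real.log 2 * S * A⁻¹ := by
      rw [hSdef, Finset.mul_sum, Finset.sum_mul]
      apply Finset.sum_congr rfl
      intro k hk
      field_simp
    rw [hsum]
    have h := aux_key C S hCpos hSnn
    rw [show C + S = S + C from add_comm C S] at h
    have hX : 0 < Real.logb 2 (1 + 1 / C) := by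
      apply Real.logb_pos (by norm_num)
      rw [lt_add_iff_pos_right]; positivity
    have hY : 0 < Real.logb 2 (1 + 1 / (S + C)) := by
      apply Real.logb_pos (by norm_num)
      rw [lt_add_iff_pos_right]; positivity
    set X := Real.logb 2 (1 + 1 / C)
    set Y := Real.logb 2 (1 + 1 / (S + C))
    have h' : X⁻¹ + Real.log 2 * S ≤ Y⁻¹ := by linarith
    calc 1 / (A * X) + Real.log 2 * S * A⁻¹
        = A⁻¹ * (X⁻¹ + Real.log 2 * S) := by
          rw [one_div, mul_inv]; ring
      _ ≤ A⁻¹ * Y⁻¹ := mul_le_mul_of_nonneg_left h' (by positivity)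
      _ = 1 / (A * Y) := by rw [one_div, mul_inv]
  -- Knaster–Tarski style construction
  set T : (Fin n → ℝ) → (Fin n → ℝ) := fun ρ i => h0 i ρ with hT
  set Sset : Set (Fin n → ℝ) :=
    {ρ | (∀ i, 0 ≤ ρ i) ∧ (∀ i, ρ i ≤ ρstar i) ∧ ∀ i, ρ i ≤ h0 i ρ} with hSset
  have h0mem : (0 : Fin n → ℝ) ∈ Sset := by
    refine ⟨fun i => le_refl 0, fun i => hρstar i, fun i => ?_⟩
    rw [hh0]
    simp only [Pi.zero_apply, mul_zero, Finset.sum_const_zero, add_zero]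
    exact hf0nn i
  have hne : Sset.Nonempty := ⟨0, h0mem⟩
  set ρ₀ : Fin n → ℝ := fun i => sSup ((fun ρ => ρ i) '' Sset) with hρ₀def
  have hbdd : ∀ i, BddAbove ((fun ρ : Fin n → ℝ => ρ i) '' Sset) := by
    intro i
    refine ⟨ρstar i, ?_⟩
    rintro x ⟨ρ, hρ, rfl⟩
    exact hρ.2.1 i
  have hub : ∀ ρ ∈ Sset, ∀ i, ρ i ≤ ρ₀ i := by
    intro ρ hρ i
    exact le_csSup (hbdd i) ⟨ρ, hρ, rfl⟩
  have hρ₀star : ∀ i, ρ₀ i ≤ ρstar i := by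
    intro i
    apply csSup_le (hne.image _)
    rintro x ⟨ρ, hρ, rfl⟩
    exact hρ.2.1 i
  have hρ₀nn : ∀ i, 0 ≤ ρ₀ i := fun i => hub 0 h0mem i
  have hρ₀le : ∀ i, ρ₀ i ≤ h0 i ρ₀ := by
    intro i
    apply csSup_le (hne.image _)
    rintro x ⟨ρ, hρ, rfl⟩
    exact (hρ.2.2 i).trans (hmono ρ ρ₀ (hub ρ hρ) i)
  have hTmem : (fun i => h0 i ρ₀) ∈ Sset := by
    refine ⟨fun i => (hρ₀nn i).trans (hρ₀le i),
      fun i => (hmono ρ₀ ρstar hρ₀star i).trans (hkey i),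
      fun i => hmono ρ₀ (fun k => h0 k ρ₀) hρ₀le i⟩
  have hge : ∀ i, h0 i ρ₀ ≤ ρ₀ i := fun i => hub _ hTmem i
  exact ⟨ρ₀, hρ₀nn, fun i => le_antisymm (hge i) (hρ₀le i), hρ₀star⟩
end

section
/- (Upper bound from the tangent linearization) Let ρ̂ ∈ ℝ_{≥0}^n, and suppose ρ* ≥ 0 satisfies f_i(ρ*) = ρ*_i for every cell i. If ρ̄ ∈ ℝ_{≥0}^n satisfies the tangent linear system ρ̄_i = h̄_i(ρ̄) for every cell i, then ρ̄_i ≥ ρ*_i for every cell i. -/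
open Real Set

/-- log t ≥ 2(t-1)/(t+1) for t ≥ 1 -/
lemma aux_log_ge (t : ℝ) (ht : 1 ≤ t) : 2*(t-1)/(t+1) ≤ Real.log t := by
  have key : MonotoneOn (fun s : ℝ => Real.log s - 2*(s-1)/(s+1)) (Set.Ici 1) := by
    apply monotoneOn_of_hasDerivWithinAt_nonneg (f' := fun s => s⁻¹ - 4/(s+1)^2)
      (convex_Ici 1)
    · apply ContinuousOn.sub
      · exact Real.continuousOn_log.mono (fun x hx => by
          simp only [Set.mem_compl_iff, Set.mem_singleton_iff]
          intro h; rw [h] at hx; simp at hx; linarith [hx])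
      · apply ContinuousOn.div (by fun_prop) (by fun_prop)
        intro x hx
        have : (1:ℝ) ≤ x := hx
        positivity
    · intro x hx
      rw [interior_Ici] at hx
      have hx1 : (1:ℝ) < x := hx
      have hx0 : x ≠ 0 := by positivity
      have hxn : x + 1 ≠ 0 := by positivity
      have h1 : HasDerivAt (fun s : ℝ => Real.log s - 2*(s-1)/(s+1)) (x⁻¹ - 4/(x+1)^2) x := by
        have hl := Real.hasDerivAt_log hx0
        have hq : HasDerivAt (fun s : ℝ => 2*(s-1)/(s+1)) (4/(x+1)^2) x := by
          have hnum : HasDerivAt (fun s : ℝ => 2*(s-1)) 2 x := by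
            simpa using ((hasDerivAt_id x).sub_const 1).const_mul 2
          have hden : HasDerivAt (fun s : ℝ => s+1) 1 x := (hasDerivAt_id x).add_const 1
          have := hnum.div hden hxn
          refine this.congr_deriv ?_
          field_simp
          ring
        exact hl.sub hq
      exact h1.hasDerivWithinAt
    · intro x hx
      rw [interior_Ici] at hx
      have hx1 : (1:ℝ) < x := hx
      rw [sub_nonneg, div_le_iff₀ (by positivity)]
      rw [inv_mul_eq_div, le_div_iff₀ (by positivity)]
      nlinarith [sq_nonneg (x-1)]
  have h0 := key (Set.self_mem_Ici) (show t ∈ Set.Ici 1 from ht) ht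
  simp at h0
  linarith


noncomputable def Lf (x : ℝ) : ℝ := Real.log (1 + 1/x)
noncomputable def phif (x : ℝ) : ℝ := (Lf x)⁻¹
noncomputable def dphif (x : ℝ) : ℝ := ((x^2+x) * (Lf x)^2)⁻¹
noncomputable def psif (x : ℝ) : ℝ := (x^2+x) * (Lf x)^2

lemma Lf_pos {x : ℝ} (hx : 0 < x) : 0 < Lf x := by
  have : 1 < 1 + 1/x := by
    have : 0 < 1/x := by positivity
    linarith
  exact Real.log_pos this

lemma base_pos {x : ℝ} (hx : 0 < x) : 0 < 1 + 1/x := by positivity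

lemma hasDerivAt_Lf {x : ℝ} (hx : 0 < x) : HasDerivAt Lf (-(x^2+x)⁻¹) x := by
  have h1 : HasDerivAt (fun s : ℝ => 1 + 1/s) (-(x^2)⁻¹) x := by
    simpa [one_div] using (hasDerivAt_inv hx.ne').const_add 1
  have := h1.log (base_pos hx).ne'
  refine this.congr_deriv (Eq.symm ?_)
  rw [div_eq_mul_inv]
  rw [neg_mul, neg_inj]
  rw [← mul_inv]
  congr 1
  field_simp

lemma hasDerivAt_phif {x : ℝ} (hx : 0 < x) : HasDerivAt phif (dphif x) x := by
  have := (hasDerivAt_Lf hx).inv (Lf_pos hx).ne'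
  refine this.congr_deriv (Eq.symm ?_)
  unfold dphif
  rw [neg_neg, mul_inv, div_eq_mul_inv]

lemma hasDerivAt_psif {x : ℝ} (hx : 0 < x) :
    HasDerivAt psif ((2*x+1) * (Lf x)^2 - 2 * Lf x) x := by
  have hp : HasDerivAt (fun s : ℝ => s^2+s) (2*x+1) x := by
    exact ((hasDerivAt_pow 2 x).add (hasDerivAt_id x)).congr_deriv (by simp)
  have hL2 : HasDerivAt (fun s => (Lf s)^2) (2 * Lf x * (-(x^2+x)⁻¹)) x := by
    have := (hasDerivAt_Lf hx).pow 2
    exact this.congr_deriv (by simp)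
  have := hp.mul hL2
  refine this.congr_deriv ?_
  have hne : x^2 + x ≠ 0 := by positivity
  field_simp
  ring

lemma psif_mono : MonotoneOn psif (Set.Ioi 0) := by
  apply monotoneOn_of_hasDerivWithinAt_nonneg
    (f' := fun x => (2*x+1) * (Lf x)^2 - 2 * Lf x) (convex_Ioi 0)
  · intro x hx
    exact (hasDerivAt_psif hx).continuousAt.continuousWithinAt
  · intro x hx
    rw [interior_Ioi] at hx
    exact (hasDerivAt_psif hx).hasDerivWithinAt
  · intro x hx
    rw [interior_Ioi] at hx
    have hx' : (0:ℝ) < x := hx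
    have hL := Lf_pos hx'
    have hlog : 2/(2*x+1) ≤ Lf x := by
      have hinv : (0:ℝ) < 1/x := by positivity
      have h := aux_log_ge (1 + 1/x) (by linarith)
      have heq : 2*(1+1/x-1)/(1+1/x+1) = 2/(2*x+1) := by
        rw [div_eq_div_iff (by positivity) (by positivity)]
        field_simp
        ring
      unfold Lf
      linarith [heq ▸ h]
    have h2 : 2 ≤ (2*x+1) * Lf x := by
      rw [div_le_iff₀ (by positivity)] at hlog
      linarith
    have : 0 ≤ Lf x * ((2*x+1) * Lf x - 2) := by
      apply mul_nonneg hL.le; linarith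
    nlinarith
  
lemma psif_pos {x : ℝ} (hx : 0 < x) : 0 < psif x := by
  have := Lf_pos hx
  unfold psif
  positivity

lemma dphif_anti : AntitoneOn dphif (Set.Ioi 0) := by
  intro x hx y hy hxy
  unfold dphif
  rw [← one_div, ← one_div]
  apply one_div_le_one_div_of_le (psif_pos hx)
  exact psif_mono hx hy hxy

lemma tangent_ineq {v w : ℝ} (hv : 0 < v) (hw : 0 < w) :
    phif w ≤ phif v + dphif v * (w - v) := by
  rcases lt_trichotomy v w with h | h | h
  · obtain ⟨ξ, hξ, hslope⟩ := exists_hasDerivAt_eq_slope phif dphif h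
      (fun x hx => (hasDerivAt_phif (lt_of_lt_of_le hv hx.1)).continuousAt.continuousWithinAt)
      (fun x hx => hasDerivAt_phif (lt_trans hv hx.1))
    have hξ0 : 0 < ξ := lt_trans hv hξ.1
    have hle : dphif ξ ≤ dphif v := dphif_anti hv hξ0 hξ.1.le
    have : (phif w - phif v) / (w - v) ≤ dphif v := hslope ▸ hle
    rw [div_le_iff₀ (by linarith)] at this
    linarith
  · subst h; simp
  · obtain ⟨ξ, hξ, hslope⟩ := exists_hasDerivAt_eq_slope phif dphif h
      (fun x hx => (hasDerivAt_phif (lt_of_lt_of_le hw hx.1)).continuousAt.continuousWithinAt)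
      (fun x hx => hasDerivAt_phif (lt_trans hw hx.1))
    have hξ0 : 0 < ξ := lt_trans hw hξ.1
    have hge : dphif v ≤ dphif ξ := dphif_anti hξ0 hv hξ.2.le
    have : dphif v ≤ (phif v - phif w) / (v - w) := hslope ▸ hge
    rw [le_div_iff₀ (by linarith)] at this
    nlinarith

lemma logb_term_eq (A X : ℝ) : 1/(A * Real.logb 2 X) = (Real.log 2 / A) * (Real.log X)⁻¹ := by
  simp [Real.logb, div_eq_mul_inv, mul_inv]
  ring

lemma dterm_eq {x : ℝ} (hx : 0 < x) :
    1 / ((Real.log (1 + 1 / x)) ^ 2 * x ^ 2 * (1 + 1 / x)) = dphif x := by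
  unfold dphif Lf
  rw [one_div]
  congr 1
  field_simp

/-- Upper bound from the tangent linearization at `ρ̂`: any nonnegative
solution `ρ̄` of the tangent linear system `ρ = h̄(ρ)` dominates the
fixed point `ρ*` of the load-coupling system componentwise. -/
theorem stmt_19
    (n : ℕ) (hn : 2 ≤ n)
    (J : Fin n → Finset ℕ) (hJ : ∀ i, (J i).Nonempty)
    (a c : Fin n → ℕ → ℝ) (b : Fin n → Fin n → ℕ → ℝ)
    (ha : ∀ i, ∀ j ∈ J i, 0 < a i j)
    (hc : ∀ i, ∀ j ∈ J i, 0 < c i j)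
    (hb : ∀ i k, k ≠ i → ∀ j ∈ J i, 0 < b i k j)
    (f : Fin n → (Fin n → ℝ) → ℝ)
    (hf : ∀ i ρ, f i ρ =
      ∑ j ∈ J i, 1 / (a i j * Real.logb 2
        (1 + 1 / (∑ k ∈ Finset.univ.erase i, b i k j * ρ k + c i j))))
    (ρhat : Fin n → ℝ) (hρhat : ∀ i, 0 ≤ ρhat i)
    (ρstar : Fin n → ℝ) (hρstar : ∀ i, 0 ≤ ρstar i)
    (hfix : ∀ i, f i ρstar = ρstar i)
    (u : Fin n → ℕ → ℝ)
    (hu : ∀ i j, u i j = ∑ k ∈ Finset.univ.erase i, b i k j * ρhat k + c i j)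
    (D : Fin n → Fin n → ℝ)
    (hD : ∀ i k, D i k = Real.log 2 * ∑ j ∈ J i, (b i k j / a i j) *
      (1 / ((Real.log (1 + 1 / u i j)) ^ 2 * (u i j) ^ 2 * (1 + 1 / u i j))))
    (hbar : Fin n → (Fin n → ℝ) → ℝ)
    (hhbar : ∀ i ρ, hbar i ρ =
      f i ρhat + ∑ k ∈ Finset.univ.erase i, D i k * (ρ k - ρhat k))
    (ρbar : Fin n → ℝ) (hρbar : ∀ i, 0 ≤ ρbar i)
    (hfixbar : ∀ i, hbar i ρbar = ρbar i) :
    ∀ i, ρstar i ≤ ρbar i := by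
  have hlog2 : (0:ℝ) < Real.log 2 := Real.log_pos (by norm_num)
  -- positivity of interference terms
  have hVpos : ∀ (ρ : Fin n → ℝ), (∀ k, 0 ≤ ρ k) → ∀ i, ∀ j ∈ J i,
      0 < ∑ k ∈ Finset.univ.erase i, b i k j * ρ k + c i j := by
    intro ρ hρ i j hj
    have h1 : 0 ≤ ∑ k ∈ Finset.univ.erase i, b i k j * ρ k := by
      apply Finset.sum_nonneg
      intro k hk
      exact mul_nonneg (hb i k (Finset.mem_erase.mp hk).1 j hj).le (hρ k)
    linarith [hc i j hj]
  have hupos : ∀ i, ∀ j ∈ J i, 0 < u i j := by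
    intro i j hj; rw [hu]; exact hVpos ρhat hρhat i j hj
  -- rewrite f in terms of phif
  have hfphi : ∀ i (ρ : Fin n → ℝ), f i ρ = ∑ j ∈ J i,
      (Real.log 2 / a i j) * phif (∑ k ∈ Finset.univ.erase i, b i k j * ρ k + c i j) := by
    intro i ρ
    rw [hf]
    apply Finset.sum_congr rfl
    intro j hj
    rw [logb_term_eq]
    rfl
  -- the D sum in phif form
  have hDsum : ∀ i (ρ : Fin n → ℝ),
      ∑ k ∈ Finset.univ.erase i, D i k * (ρ k - ρhat k)
        = ∑ j ∈ J i, (Real.log 2 / a i j) * (dphif (u i j) *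
            ((∑ k ∈ Finset.univ.erase i, b i k j * ρ k + c i j) - u i j)) := by
    intro i ρ
    have step1 : ∀ k, D i k * (ρ k - ρhat k)
        = ∑ j ∈ J i, (Real.log 2 / a i j) * (dphif (u i j) * (b i k j * (ρ k - ρhat k))) := by
      intro k
      rw [hD, Finset.mul_sum, Finset.sum_mul]
      apply Finset.sum_congr rfl
      intro j hj
      rw [dterm_eq (hupos i j hj)]
      ring
    calc ∑ k ∈ Finset.univ.erase i, D i k * (ρ k - ρhat k)
        = ∑ k ∈ Finset.univ.erase i, ∑ j ∈ J i,
            (Real.log 2 / a i j) * (dphif (u i j) * (b i k j * (ρ k - ρhat k))) := by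
          exact Finset.sum_congr rfl (fun k _ => step1 k)
      _ = ∑ j ∈ J i, ∑ k ∈ Finset.univ.erase i,
            (Real.log 2 / a i j) * (dphif (u i j) * (b i k j * (ρ k - ρhat k))) :=
          Finset.sum_comm
      _ = ∑ j ∈ J i, (Real.log 2 / a i j) * (dphif (u i j) *
            ((∑ k ∈ Finset.univ.erase i, b i k j * ρ k + c i j) - u i j)) := by
          apply Finset.sum_congr rfl
          intro j hj
          rw [hu]
          have : (∑ k ∈ Finset.univ.erase i, b i k j * ρ k + c i j) -
              (∑ k ∈ Finset.univ.erase i, b i k j * ρhat k + c i j)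
              = ∑ k ∈ Finset.univ.erase i, b i k j * (ρ k - ρhat k) := by
            rw [add_sub_add_right_eq_sub, ← Finset.sum_sub_distrib]
            exact Finset.sum_congr rfl fun k _ => (mul_sub _ _ _).symm
          rw [this]
          rw [Finset.mul_sum, Finset.mul_sum]
  -- key tangent inequality: f i ρ ≤ f i ρhat + ∑ D i k (ρ k - ρhat k)
  have key : ∀ (ρ : Fin n → ℝ), (∀ k, 0 ≤ ρ k) → ∀ i,
      f i ρ ≤ f i ρhat + ∑ k ∈ Finset.univ.erase i, D i k * (ρ k - ρhat k) := by
    intro ρ hρ i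
    rw [hDsum i ρ, hfphi i ρ]
    have huu : ∀ j ∈ J i, (∑ k ∈ Finset.univ.erase i, b i k j * ρhat k + c i j) = u i j := by
      intro j hj; rw [hu]
    have hfhat : f i ρhat = ∑ j ∈ J i, Real.log 2 / a i j * phif (u i j) := by
      rw [hfphi i ρhat]
      exact Finset.sum_congr rfl fun j hj => by rw [huu j hj]
    rw [hfhat, ← Finset.sum_add_distrib]
    apply Finset.sum_le_sum
    intro j hj
    rw [← mul_add]
    have hap := ha i j hj
    have hnn : (0:ℝ) ≤ Real.log 2 / a i j := by positivity
    exact mul_le_mul_of_nonneg_left (tangent_ineq (hupos i j hj) (hVpos ρ hρ i j hj)) hnn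
  -- D is nonnegative
  have hDnn : ∀ i k, k ∈ Finset.univ.erase i → 0 ≤ D i k := by
    intro i k hk
    rw [hD]
    apply mul_nonneg hlog2.le
    apply Finset.sum_nonneg
    intro j hj
    have hbp := hb i k (Finset.mem_erase.mp hk).1 j hj
    have hap := ha i j hj
    have hup := hupos i j hj
    have h1 : (0:ℝ) < 1 + 1 / u i j := by positivity
    have h2 : (0:ℝ) < Real.log (1 + 1 / u i j) := Real.log_pos (by
      have : 0 < 1 / u i j := by positivity
      linarith)
    positivity
  -- f i 0 > 0
  have hf0 : ∀ i, 0 < f i (fun _ => 0) := by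
    intro i
    rw [hf]
    apply Finset.sum_pos _ (hJ i)
    intro j hj
    have hsum0 : (∑ k ∈ Finset.univ.erase i, b i k j * (0:ℝ) + c i j) = c i j := by
      simp
    rw [hsum0]
    have hcp := hc i j hj
    have hl : 0 < Real.logb 2 (1 + 1 / c i j) := by
      apply Real.logb_pos (by norm_num)
      have : 0 < 1 / c i j := by positivity
      linarith
    have hap := ha i j hj
    positivity
  -- the constant q i is positive
  have hq : ∀ i, 0 < f i ρhat + ∑ k ∈ Finset.univ.erase i, D i k * (0 - ρhat k) := by
    intro i
    have h := key (fun _ => 0) (fun _ => le_refl 0) i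
    exact lt_of_lt_of_le (hf0 i) h
  -- splitting identity
  have hsplit : ∀ i (ρ : Fin n → ℝ),
      ∑ k ∈ Finset.univ.erase i, D i k * (ρ k - ρhat k)
        = (∑ k ∈ Finset.univ.erase i, D i k * (0 - ρhat k))
          + ∑ k ∈ Finset.univ.erase i, D i k * ρ k := by
    intro i ρ
    rw [← Finset.sum_add_distrib]
    exact Finset.sum_congr rfl fun k _ => by ring
  -- ρbar is positive
  have hbareq : ∀ i, ρbar i = (f i ρhat + ∑ k ∈ Finset.univ.erase i, D i k * (0 - ρhat k))
      + ∑ k ∈ Finset.univ.erase i, D i k * ρbar k := by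
    intro i
    rw [← hfixbar i, hhbar, hsplit i ρbar]
    ring
  have hbarpos : ∀ i, 0 < ρbar i := by
    intro i
    rw [hbareq i]
    have h1 : 0 ≤ ∑ k ∈ Finset.univ.erase i, D i k * ρbar k :=
      Finset.sum_nonneg fun k hk => mul_nonneg (hDnn i k hk) (hρbar k)
    linarith [hq i]
  -- difference inequality
  have hdiff : ∀ i, ∑ k ∈ Finset.univ.erase i, D i k * (ρbar k - ρstar k)
      ≤ ρbar i - ρstar i := by
    intro i
    have h1 : ρstar i ≤ f i ρhat + ∑ k ∈ Finset.univ.erase i, D i k * (ρstar k - ρhat k) := by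
      rw [← hfix i]; exact key ρstar hρstar i
    have h2 : ρbar i = f i ρhat + ∑ k ∈ Finset.univ.erase i, D i k * (ρbar k - ρhat k) := by
      rw [← hfixbar i, hhbar]
    have h3 : ∑ k ∈ Finset.univ.erase i, D i k * (ρbar k - ρhat k)
        - ∑ k ∈ Finset.univ.erase i, D i k * (ρstar k - ρhat k)
        = ∑ k ∈ Finset.univ.erase i, D i k * (ρbar k - ρstar k) := by
      rw [← Finset.sum_sub_distrib]
      exact Finset.sum_congr rfl fun k _ => by ring
    linarith
  -- minimum of normalized gap
  obtain ⟨i0, _, hmin⟩ := Finset.exists_min_image Finset.univ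
    (fun i => (ρbar i - ρstar i) / ρbar i) ⟨⟨0, by omega⟩, Finset.mem_univ _⟩
  set s : ℝ := (ρbar i0 - ρstar i0) / ρbar i0 with hs
  have hlb : ∀ k, s * ρbar k ≤ ρbar k - ρstar k := by
    intro k
    have h := hmin k (Finset.mem_univ k)
    rw [le_div_iff₀ (hbarpos k)] at h
    linarith
  have hs0 : 0 ≤ s := by
    by_contra hneg
    push_neg at hneg
    have h1 : ∑ k ∈ Finset.univ.erase i0, D i0 k * (s * ρbar k)
        ≤ ∑ k ∈ Finset.univ.erase i0, D i0 k * (ρbar k - ρstar k) :=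
      Finset.sum_le_sum fun k hk =>
        mul_le_mul_of_nonneg_left (hlb k) (hDnn i0 k hk)
    have h2 : ∑ k ∈ Finset.univ.erase i0, D i0 k * (s * ρbar k)
        = s * ∑ k ∈ Finset.univ.erase i0, D i0 k * ρbar k := by
      rw [Finset.mul_sum]
      exact Finset.sum_congr rfl fun k _ => by ring
    have h3 : ∑ k ∈ Finset.univ.erase i0, D i0 k * ρbar k
        = ρbar i0 - (f i0 ρhat + ∑ k ∈ Finset.univ.erase i0, D i0 k * (0 - ρhat k)) := by
      linarith [hbareq i0]
    have h4 : s * ρbar i0 = ρbar i0 - ρstar i0 := by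
      rw [hs]; exact div_mul_cancel₀ _ (hbarpos i0).ne'
    have hq0 := hq i0
    have hd := hdiff i0
    nlinarith
  intro i
  have := hlb i
  nlinarith [mul_nonneg hs0 (hbarpos i).le]
end
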